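/- Let u be a nonzero vector in ℝ² and let v₁, w₁, v₂, w₂ be unit vectors in ℝ² such that v₁ ⊥ w₁, v₂ ⊥ w₂, and the angle between v₁ and v₂ is φ ∈ [π/4, π/2]. Suppose u has nonnegative inner product with v₁, w₁, and v₂. Then u·v₁ + u·w₁ + u·v₂ + |u·w₂| ≤ 2(sin(φ/2) + cos(φ/2))·‖u‖. -/

import Mathlib

lemma pair_parseval {v w : EuclideanSpace ℝ (Fin 2)}
    (hv : ‖v‖ = 1) (hw : ‖w‖ = 1) (hvw : (inner ℝ v w : ℝ) = 0)
    (x y : EuclideanSpace ℝ (Fin 2)) :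
    (inner ℝ x y : ℝ) = inner ℝ x v * inner ℝ y v + inner ℝ x w * inner ℝ y w := by
  have hon : Orthonormal ℝ ![v, w] := by
    rw [orthonormal_iff_ite]
    intro i j
    fin_cases i <;> fin_cases j
    · show (inner ℝ v v : ℝ) = _
      rw [real_inner_self_eq_norm_sq, hv]; norm_num
    · show (inner ℝ v w : ℝ) = _
      rw [hvw]; norm_num
    · show (inner ℝ w v : ℝ) = _
      rw [real_inner_comm, hvw]; norm_num
    · show (inner ℝ w w : ℝ) = _
      rw [real_inner_self_eq_norm_sq, hw]; norm_num
  have hcard : Fintype.card (Fin 2) = Module.finrank ℝ (EuclideanSpace ℝ (Fin 2)) := by simp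
  let b := basisOfOrthonormalOfCardEqFinrank hon hcard
  have hb : ⇑b = ![v, w] := coe_basisOfOrthonormalOfCardEqFinrank hon hcard
  have hbon : Orthonormal ℝ b := by rw [hb]; exact hon
  let ob := b.toOrthonormalBasis hbon
  have := ob.sum_inner_mul_inner x y
  have hob : ∀ i, ob i = ![v, w] i := by
    intro i; rw [Module.Basis.coe_toOrthonormalBasis, hb]
  rw [Fin.sum_univ_two, hob 0, hob 1] at this
  simp only [Matrix.cons_val_zero, Matrix.cons_val_one, Matrix.head_cons] at this
  rw [← this, real_inner_comm v y, real_inner_comm w y]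

lemma keyCS (A B a b r K : ℝ) (hr : 0 ≤ r) (hr2 : a ^ 2 + b ^ 2 = r ^ 2)
    (hK : 0 ≤ K) (hAB : A ^ 2 + B ^ 2 ≤ K ^ 2) : A * a + B * b ≤ K * r := by
  nlinarith [sq_nonneg (A * b - B * a), sq_nonneg (A * a + B * b + K * r),
    sq_nonneg (A * a + B * b - K * r), mul_nonneg hK hr]

lemma cos_le_sin_aux (φ : ℝ) (h1 : Real.pi / 4 ≤ φ) (h2 : φ ≤ Real.pi / 2) :
    Real.cos φ ≤ Real.sin φ := by
  have hpi := Real.pi_pos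
  have h3 : 0 ≤ Real.sin (φ - Real.pi / 4) :=
    Real.sin_nonneg_of_nonneg_of_le_pi (by linarith) (by linarith)
  rw [Real.sin_sub, Real.cos_pi_div_four, Real.sin_pi_div_four] at h3
  nlinarith [Real.sq_sqrt (show (0:ℝ) ≤ 2 by norm_num), Real.sqrt_nonneg 2]

lemma bound1_aux (p q S : ℝ) (hpq : p ^ 2 + q ^ 2 = 1) (h : p ≤ S) :
    (1 + p - q) ^ 2 + (1 + p + q) ^ 2 ≤ 4 * (1 + S) := by nlinarith

lemma bound2_aux (p q S : ℝ) (hpq : p ^ 2 + q ^ 2 = 1) (h : q ≤ S) :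
    (1 + p + q) ^ 2 + (1 + q - p) ^ 2 ≤ 4 * (1 + S) := by nlinarith

theorem stmt6 (u v₁ w₁ v₂ w₂ : EuclideanSpace ℝ (Fin 2)) (φ : ℝ)
    (hu : u ≠ 0)
    (hv₁ : ‖v₁‖ = 1) (hw₁ : ‖w₁‖ = 1) (hv₂ : ‖v₂‖ = 1) (hw₂ : ‖w₂‖ = 1)
    (hperp₁ : (inner ℝ v₁ w₁ : ℝ) = 0) (hperp₂ : (inner ℝ v₂ w₂ : ℝ) = 0)
    (hangle : InnerProductGeometry.angle v₁ v₂ = φ)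
    (hφ : φ ∈ Set.Icc (Real.pi / 4) (Real.pi / 2))
    (h1 : 0 ≤ (inner ℝ u v₁ : ℝ)) (h2 : 0 ≤ (inner ℝ u w₁ : ℝ))
    (h3 : 0 ≤ (inner ℝ u v₂ : ℝ)) :
    (inner ℝ u v₁ : ℝ) + (inner ℝ u w₁ : ℝ) + (inner ℝ u v₂ : ℝ) + |(inner ℝ u w₂ : ℝ)| ≤
      2 * (Real.sin (φ / 2) + Real.cos (φ / 2)) * ‖u‖ := by
  obtain ⟨hφ1, hφ2⟩ := hφ
  have hpi := Real.pi_pos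
  have hφ0 : 0 ≤ φ := le_trans (by positivity) hφ1
  set a : ℝ := inner ℝ u v₁ with ha
  set b : ℝ := inner ℝ u w₁ with hb
  set p : ℝ := inner ℝ v₂ v₁ with hp0
  set q : ℝ := inner ℝ v₂ w₁ with hq0
  set p' : ℝ := inner ℝ w₂ v₁ with hp'0
  set q' : ℝ := inner ℝ w₂ w₁ with hq'0
  set r : ℝ := ‖u‖ with hrdef
  have hr : (0:ℝ) ≤ r := norm_nonneg u
  -- Parseval facts
  have hr2 : a ^ 2 + b ^ 2 = r ^ 2 := by
    have h := pair_parseval hv₁ hw₁ hperp₁ u u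
    rw [real_inner_self_eq_norm_sq] at h
    rw [ha, hb, hrdef]; linear_combination -h
  have hc : (inner ℝ u v₂ : ℝ) = p * a + q * b := by
    have h := pair_parseval hv₁ hw₁ hperp₁ u v₂
    rw [ha, hb, hp0, hq0]; linear_combination h
  have hd : (inner ℝ u w₂ : ℝ) = p' * a + q' * b := by
    have h := pair_parseval hv₁ hw₁ hperp₁ u w₂
    rw [ha, hb, hp'0, hq'0]; linear_combination h
  have hpq : p ^ 2 + q ^ 2 = 1 := by
    have h := pair_parseval hv₁ hw₁ hperp₁ v₂ v₂
    rw [real_inner_self_eq_norm_sq, hv₂] at h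
    rw [hp0, hq0]; linear_combination -h
  have hpq' : p' ^ 2 + q' ^ 2 = 1 := by
    have h := pair_parseval hv₁ hw₁ hperp₁ w₂ w₂
    rw [real_inner_self_eq_norm_sq, hw₂] at h
    rw [hp'0, hq'0]; linear_combination -h
  have horth : p * p' + q * q' = 0 := by
    have h := pair_parseval hv₁ hw₁ hperp₁ v₂ w₂
    rw [hperp₂] at h
    rw [hp0, hq0, hp'0, hq'0]; linear_combination -h
  -- angle
  have hp : p = Real.cos φ := by
    have h := InnerProductGeometry.cos_angle v₁ v₂
    rw [hangle, hv₁, hv₂] at h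
    rw [hp0, real_inner_comm, h]; norm_num
  -- the sign unit s
  set s : ℝ := p * q' - q * p' with hs0
  have hs2 : s ^ 2 = 1 := by
    have hkey : s ^ 2 + (p * p' + q * q') ^ 2 = (p ^ 2 + q ^ 2) * (p' ^ 2 + q' ^ 2) := by
      rw [hs0]; ring
    rw [horth, hpq, hpq'] at hkey
    linarith [hkey]
  have hp' : p' = -q * s := by
    have h : p' * (p ^ 2 + q ^ 2) = -q * s + p * (p * p' + q * q') := by rw [hs0]; ring
    rw [hpq, horth] at h; linarith [h]
  have hq' : q' = p * s := by
    have h : q' * (p ^ 2 + q ^ 2) = p * s + q * (p * p' + q * q') := by rw [hs0]; ring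
    rw [hpq, horth] at h; linarith [h]
  -- trig facts
  have hsin0 : 0 ≤ Real.sin φ := Real.sin_nonneg_of_nonneg_of_le_pi hφ0 (by linarith)
  have hpyth : Real.sin φ ^ 2 + Real.cos φ ^ 2 = 1 := Real.sin_sq_add_cos_sq φ
  have hcs : Real.cos φ ≤ Real.sin φ := cos_le_sin_aux φ hφ1 hφ2
  have hps : p ≤ Real.sin φ := by rw [hp]; exact hcs
  have hq2 : q ^ 2 = Real.sin φ ^ 2 := by
    have h : q ^ 2 = 1 - p ^ 2 := by linarith [hpq]
    rw [hp] at h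
    linear_combination h - hpyth
  -- K
  set K : ℝ := 2 * (Real.sin (φ / 2) + Real.cos (φ / 2)) with hK0
  have hshalf : 0 ≤ Real.sin (φ / 2) :=
    Real.sin_nonneg_of_nonneg_of_le_pi (by linarith) (by linarith)
  have hchalf : 0 ≤ Real.cos (φ / 2) :=
    Real.cos_nonneg_of_mem_Icc ⟨by linarith, by linarith⟩
  have hKnn : 0 ≤ K := by rw [hK0]; linarith
  have hdouble : Real.sin φ = 2 * Real.sin (φ / 2) * Real.cos (φ / 2) := by
    have h := Real.sin_two_mul (φ / 2)
    rw [show 2 * (φ / 2) = φ by ring] at h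
    linarith [h]
  have hK2 : K ^ 2 = 4 * (1 + Real.sin φ) := by
    rw [hK0, hdouble]
    linear_combination 4 * Real.sin_sq_add_cos_sq (φ / 2)
  -- case splits
  have hqcase : q = Real.sin φ ∨ q = -Real.sin φ := by
    have h : (q - Real.sin φ) * (q + Real.sin φ) = 0 := by linear_combination hq2
    rcases mul_eq_zero.mp h with h | h
    · left; linarith
    · right; linarith
  have hqs : q ≤ Real.sin φ := by rcases hqcase with h | h <;> rw [h] <;> linarith
  have hscase : s = 1 ∨ s = -1 := by
    have h : (s - 1) * (s + 1) = 0 := by linear_combination hs2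
    rcases mul_eq_zero.mp h with h | h
    · left; linarith
    · right; linarith
  have habsd : |(inner ℝ u w₂ : ℝ)| = |p * b - q * a| := by
    rw [hd, hp', hq']
    rcases hscase with h | h
    · rw [h, show -q * 1 * a + p * 1 * b = p * b - q * a by ring]
    · rw [h, show -q * (-1) * a + p * (-1) * b = -(p * b - q * a) by ring, abs_neg]
  rw [hc, habsd]
  rcases abs_cases (p * b - q * a) with ⟨habs, hsign⟩ | ⟨habs, hsign⟩ <;> rw [habs]
  · have key : (1 + p - q) * a + (1 + p + q) * b ≤ K * r := by
      apply keyCS _ _ _ _ _ _ hr hr2 hKnn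
      rw [hK2]; exact bound1_aux p q (Real.sin φ) hpq hps
    linarith [key, show (1 + p - q) * a + (1 + p + q) * b
      = a + b + (p * a + q * b) + (p * b - q * a) by ring]
  · have key : (1 + p + q) * a + (1 + q - p) * b ≤ K * r := by
      apply keyCS _ _ _ _ _ _ hr hr2 hKnn
      rw [hK2]; exact bound2_aux p q (Real.sin φ) hpq hqs
    linarith [key, show (1 + p + q) * a + (1 + q - p) * b
      = a + b + (p * a + q * b) + -(p * b - q * a) by ring]
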